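/- arXiv:2407.02045 — 3 statements merged into one kernel-verified Lean document; each statement's English description precedes it below -/
import Mathlib

section
/- For every real number s with 0 < s ≤ 1/2, we have ⌊1/s⌋ · s ≥ 2/3. (This is the key estimate for the 1-advice-bit algorithm achieving competitive ratio 3/2 for the online simple unbounded knapsack problem.) -/
theorem greedy_two_thirds (s : ℝ) (hs : 0 < s) (hs2 : s ≤ 1 / 2) :
    (⌊1 / s⌋ : ℝ) * s ≥ 2 / 3 := by
  set n := ⌊1 / s⌋ with hn
  have h2 : (2 : ℤ) ≤ n := by
    rw [hn]
    have : (2 : ℝ) ≤ 1 / s := by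
      rw [le_div_iff₀ hs]; linarith
    exact_mod_cast Int.le_floor.mpr (by exact_mod_cast this)
  have hlt : 1 / s < (n : ℝ) + 1 := by
    have := Int.lt_floor_add_one (1 / s)
    exact_mod_cast this
  have hnpos : (0 : ℝ) < (n : ℝ) + 1 := by positivity
  have hsgt : 1 / ((n : ℝ) + 1) < s := by
    rw [div_lt_iff₀ hnpos]
    have h1 := (div_lt_iff₀ hs).mp hlt
    nlinarith
  have hn2 : (2 : ℝ) ≤ (n : ℝ) := by exact_mod_cast h2
  have : (n : ℝ) * (1 / ((n : ℝ) + 1)) ≥ 2 / 3 := by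
    rw [mul_one_div, ge_iff_le, div_le_div_iff₀ (by norm_num) hnpos]
    have h1 := (div_lt_iff₀ hs).mp hlt
    nlinarith
  calc (n : ℝ) * s ≥ (n : ℝ) * (1 / ((n : ℝ) + 1)) := by
        apply mul_le_mul_of_nonneg_left (le_of_lt hsgt) (by linarith)
  _ ≥ 2 / 3 := this
end

section
/- The infimum over p₀, p₁ ≥ 0 with p₀ + p₁ ≤ 1 of max{1/p₀, (3/4)/(p₀/2 + (3/4)p₁), 1/(p₀/2 + (3/4)p₁ + 1 − p₀ − p₁)} equals 19/12 (with the convention that division by 0 gives ∞). -/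
theorem minmax_nineteen_twelfths :
    (∀ p₀ p₁ : ℝ, 0 ≤ p₀ → 0 ≤ p₁ → p₀ + p₁ ≤ 1 → p₀ ≠ 0 →
      19 / 12 ≤ max (1 / p₀) (max ((3 / 4) / (p₀ / 2 + (3 / 4) * p₁))
        (1 / (p₀ / 2 + (3 / 4) * p₁ + 1 - p₀ - p₁)))) ∧
    max (1 / (12 / 19 : ℝ)) (max ((3 / 4) / ((12 / 19 : ℝ) / 2 + (3 / 4) * (4 / 19)))
        (1 / ((12 / 19 : ℝ) / 2 + (3 / 4) * (4 / 19) + 1 - 12 / 19 - 4 / 19))) = 19 / 12 := by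
  constructor
  · intro p₀ p₁ h0 h1 hsum hne
    have hp0 : 0 < p₀ := lt_of_le_of_ne h0 (Ne.symm hne)
    have hd2 : 0 < p₀ / 2 + (3 / 4) * p₁ := by positivity
    have hd3 : 0 < p₀ / 2 + (3 / 4) * p₁ + 1 - p₀ - p₁ := by linarith
    by_contra h
    push_neg at h
    rw [max_lt_iff, max_lt_iff] at h
    obtain ⟨ha, hb, hc⟩ := h
    rw [div_lt_iff₀ hp0] at ha
    rw [div_lt_iff₀ hd2] at hb
    rw [div_lt_iff₀ hd3] at hc
    linarith
  · norm_num
end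

section
/- (1/2)·(3 + ∫_{2/3}^{1} (1 + ln(2 − x))/x dx) < 1.7353. -/
open intervalIntegral

/-- Upper bound for `log (3/2)` from the Taylor series with 10 terms. -/
lemma log_three_halves_lt : Real.log (3 / 2) ≤ 20111923 / 49601160 := by
  have h := Real.abs_log_sub_add_sum_range_le (x := 1/3) (by rw [abs_lt]; norm_num) 10
  have h2 : Real.log (1 - 1/3) = - Real.log (3/2) := by
    rw [show (1 : ℝ) - 1/3 = (3/2)⁻¹ by norm_num, Real.log_inv]
  rw [h2, abs_le] at h
  have h1 := h.1
  simp only [Finset.sum_range_succ, Finset.sum_range_zero] at h1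
  rw [abs_of_pos (by norm_num : (0:ℝ) < 1/3)] at h1
  norm_num at h1 ⊢
  linarith

/-- Degree-7 polynomial upper bound for `log (1+u)` on `[0, 1/3]`. -/
lemma log_one_add_le {u : ℝ} (h0 : 0 ≤ u) (h1 : u ≤ 1/3) :
    Real.log (1 + u) ≤ u - u^2/2 + u^3/3 - u^4/4 + u^5/5 - u^6/6 + (3/2) * u^7 := by
  have h := Real.abs_log_sub_add_sum_range_le (x := -u) (by rw [abs_neg, abs_of_nonneg h0]; linarith) 6
  rw [abs_neg, abs_of_nonneg h0] at h
  have h2 : (1 : ℝ) - -u = 1 + u := by ring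
  rw [h2, abs_le] at h
  have hb := h.2
  simp only [Finset.sum_range_succ, Finset.sum_range_zero] at hb
  have htail : u ^ (6 + 1) / (1 - u) ≤ (3/2) * u^7 := by
    rw [div_le_iff₀ (by linarith)]
    nlinarith [pow_nonneg h0 7, pow_le_pow_left₀ h0 h1 7]
  nlinarith [hb, htail]

set_option maxHeartbeats 1000000 in
theorem competitive_ratio_bound :
    (1 / 2) * (3 + ∫ x in (2 / 3 : ℝ)..1, (1 + Real.log (2 - x)) / x) < 1.7353 := by
  set f : ℝ → ℝ := fun x => (1 + Real.log (2 - x)) / x with hf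
  set g : ℝ → ℝ := fun x => (187/60) * (1/x) + (-21/2 + 30*x - (101/2)*x^2 + (203/4)*x^3
      - (307/10)*x^4 + (31/3)*x^5 - (3/2)*x^6) with hg
  set F : ℝ → ℝ := fun x => (187/60) * Real.log x + ((-21/2)*x + 15*x^2 - (101/6)*x^3
      + (203/16)*x^4 - (307/50)*x^5 + (31/18)*x^6 - (3/14)*x^7) with hF
  have huIcc : Set.uIcc (2/3 : ℝ) 1 = Set.Icc (2/3 : ℝ) 1 := by
    rw [Set.uIcc_of_le (by norm_num)]
  have hfc : ContinuousOn f (Set.uIcc (2/3 : ℝ) 1) := by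
    rw [huIcc]
    apply ContinuousOn.div
    · exact ContinuousOn.add continuousOn_const
        (Real.continuousOn_log.comp (by fun_prop) (by
          intro x hx
          simp only [Set.mem_Icc] at hx
          simp only [Set.mem_compl_iff, Set.mem_singleton_iff]
          intro hc; linarith [hx.2]))
    · fun_prop
    · intro x hx
      simp only [Set.mem_Icc] at hx
      intro hc; rw [hc] at hx; linarith [hx.1]
  have hgc : ContinuousOn g (Set.uIcc (2/3 : ℝ) 1) := by
    rw [huIcc]
    apply ContinuousOn.add
    · apply ContinuousOn.mul continuousOn_const
      apply ContinuousOn.div continuousOn_const (by fun_prop)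
      intro x hx
      simp only [Set.mem_Icc] at hx
      intro hc; rw [hc] at hx; linarith [hx.1]
    · fun_prop
  have hfi : IntervalIntegrable f MeasureTheory.volume (2/3 : ℝ) 1 :=
    hfc.intervalIntegrable
  have hgi : IntervalIntegrable g MeasureTheory.volume (2/3 : ℝ) 1 :=
    hgc.intervalIntegrable
  have hmono : ∫ x in (2/3 : ℝ)..1, f x ≤ ∫ x in (2/3 : ℝ)..1, g x := by
    apply intervalIntegral.integral_mono_on (by norm_num) hfi hgi
    intro x hx
    simp only [Set.mem_Icc] at hx
    have hx0 : (0 : ℝ) < x := by linarith [hx.1]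
    have key : Real.log (2 - x) ≤ (1-x) - (1-x)^2/2 + (1-x)^3/3 - (1-x)^4/4 + (1-x)^5/5
        - (1-x)^6/6 + (3/2) * (1-x)^7 := by
      have := log_one_add_le (u := 1 - x) (by linarith [hx.2]) (by linarith [hx.1])
      rw [show (1 : ℝ) + (1 - x) = 2 - x by ring] at this
      exact this
    simp only [hf, hg]
    rw [div_le_iff₀ hx0]
    have expand : ((187:ℝ)/60 * (1/x) + (-21/2 + 30*x - (101/2)*x^2 + (203/4)*x^3
        - (307/10)*x^4 + (31/3)*x^5 - (3/2)*x^6)) * x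
        = 187/60 + (-21/2 + 30*x - (101/2)*x^2 + (203/4)*x^3
        - (307/10)*x^4 + (31/3)*x^5 - (3/2)*x^6) * x := by
      field_simp
    rw [expand]
    nlinarith [key]
  have hgval : ∫ x in (2/3 : ℝ)..1, g x
      = (187/60) * Real.log (3/2) + (-14571299/18370800 : ℝ) := by
    have hderiv : ∀ x ∈ Set.uIcc (2/3 : ℝ) 1, HasDerivAt F (g x) x := by
      intro x hx
      rw [huIcc] at hx
      simp only [Set.mem_Icc] at hx
      have hne : x ≠ 0 := by intro hc; rw [hc] at hx; linarith [hx.1]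
      have H : HasDerivAt F ((187/60) * x⁻¹ + ((-21/2)*1 + 15*(2*x^1) - (101/6)*(3*x^2)
          + (203/16)*(4*x^3) - (307/50)*(5*x^4) + (31/18)*(6*x^5) - (3/14)*(7*x^6))) x := by
        apply HasDerivAt.add
        · exact (Real.hasDerivAt_log hne).const_mul (187/60 : ℝ)
        · exact ((((((((hasDerivAt_id x).const_mul ((-21/2 : ℝ))).add
            ((hasDerivAt_pow 2 x).const_mul (15 : ℝ))).sub
            ((hasDerivAt_pow 3 x).const_mul ((101/6 : ℝ)))).add
            ((hasDerivAt_pow 4 x).const_mul ((203/16 : ℝ)))).sub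
            ((hasDerivAt_pow 5 x).const_mul ((307/50 : ℝ)))).add
            ((hasDerivAt_pow 6 x).const_mul ((31/18 : ℝ)))).sub
            ((hasDerivAt_pow 7 x).const_mul ((3/14 : ℝ))))
      have e : (187/60) * x⁻¹ + ((-21/2)*1 + 15*(2*x^1) - (101/6)*(3*x^2)
          + (203/16)*(4*x^3) - (307/50)*(5*x^4) + (31/18)*(6*x^5) - (3/14)*(7*x^6)) = g x := by
        simp only [hg]
        field_simp
        ring
      exact e ▸ H
    rw [intervalIntegral.integral_eq_sub_of_hasDerivAt hderiv hgi]
    simp only [hF]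
    rw [Real.log_one, show Real.log (2/3 : ℝ) = - Real.log (3/2) by
      rw [show (2/3 : ℝ) = (3/2)⁻¹ by norm_num, Real.log_inv]]
    ring_nf
  have hfinal : ∫ x in (2/3 : ℝ)..1, f x ≤ (187/60) * (20111923/49601160) + (-14571299/18370800 : ℝ) := by
    rw [hgval] at hmono
    have := log_three_halves_lt
    nlinarith [hmono]
  rw [hf] at hfinal
  norm_num at hfinal ⊢
  linarith
end
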